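/- For every integer r ≥ 5 with r ≡ 2 (mod 3), there exists a bipartite biregular graph with 6 vertices of degree r, 2r vertices of degree 3, and diameter 3; its order 2r + 6 attains the Moore bound M(r,3;3). -/

import Mathlib

/-- The bipartite graph on parts `A` and `B` determined by the relation `R`. -/
def bipGraph {A B : Type*} (R : A → B → Prop) : SimpleGraph (A ⊕ B) where
  Adj x y :=
    match x, y with
    | Sum.inl a, Sum.inr b => R a b
    | Sum.inr b, Sum.inl a => R a b
    | _, _ => False
  symm := ⟨by rintro (a | b) (a' | b') h <;> simp_all⟩
  loopless := ⟨by rintro (a | b) h <;> simp_all⟩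

/-- The ten lines: six cyclic translates of `{0,1,3}` plus four special lines. -/
def stmt17.lines (n : ℕ) : Finset (ZMod 6) :=
  ([{0,1,3},{1,2,4},{2,3,5},{3,4,0},{4,5,1},{5,0,2},
    {0,1,2},{2,3,4},{4,5,0},{1,3,5}] : List (Finset (ZMod 6))).getD n ∅

/-- Which line each right-vertex `j` is assigned to. -/
def stmt17.lineIdx (r j : ℕ) : ℕ :=
  if j < 6 * (r / 3) then j % 6 else 6 + (j - 6 * (r / 3))

namespace stmt17

lemma lines_card : ∀ i : Fin 10, (lines i.val).card = 3 := by decide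

lemma lines_inter : ∀ i i' : Fin 10, ∃ a : ZMod 6,
    a ∈ lines i.val ∧ a ∈ lines i'.val := by decide

lemma lines_cover : ∀ a a' : ZMod 6, ∃ c : Fin 6,
    a ∈ lines c.val ∧ a' ∈ lines c.val := by decide

lemma lines_count1 : ∀ a : ZMod 6,
    ((Finset.range 6).filter (fun c => a ∈ lines c)).card = 3 := by decide

lemma lines_count2 : ∀ a : ZMod 6,
    ((Finset.range 4).filter (fun c => a ∈ lines (6 + c))).card = 2 := by decide

lemma two_notin_lines0 : (2 : ZMod 6) ∉ lines 0 := by decide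

/-- counting multiples-of-6 residue classes. -/
lemma count_mul (k : ℕ) (S : Finset ℕ) :
    ((Finset.range (6*k)).filter (fun j => j % 6 ∈ S)).card
      = k * ((Finset.range 6).filter (fun c => c ∈ S)).card := by
  induction k with
  | zero => simp
  | succ k ih =>
    have hsplit : Finset.range (6*(k+1))
        = Finset.range (6*k) ∪ (Finset.range 6).image (fun t => 6*k + t) := by
      ext j
      simp only [Finset.mem_union, Finset.mem_range, Finset.mem_image]
      constructor
      · intro hj
        by_cases h : j < 6*k
        · exact Or.inl h
        · exact Or.inr ⟨j - 6*k, by omega, by omega⟩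
      · rintro (h | ⟨t, ht, rfl⟩) <;> omega
    have hdisj : Disjoint
        ((Finset.range (6*k)).filter (fun j => j % 6 ∈ S))
        (((Finset.range 6).image (fun t => 6*k + t)).filter (fun j => j % 6 ∈ S)) := by
      rw [Finset.disjoint_left]
      intro x hx hx'
      simp only [Finset.mem_filter, Finset.mem_range, Finset.mem_image] at hx hx'
      omega
    have himg : (((Finset.range 6).image (fun t => 6*k + t)).filter (fun j => j % 6 ∈ S))
        = ((Finset.range 6).filter (fun c => c ∈ S)).image (fun t => 6*k + t) := by
      ext j
      simp only [Finset.mem_filter, Finset.mem_image, Finset.mem_range]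
      constructor
      · rintro ⟨⟨t, ht, rfl⟩, hj⟩
        refine ⟨t, ⟨ht, ?_⟩, rfl⟩
        have : (6*k + t) % 6 = t := by omega
        rwa [this] at hj
      · rintro ⟨t, ⟨ht, hts⟩, rfl⟩
        refine ⟨⟨t, ht, rfl⟩, ?_⟩
        have : (6*k + t) % 6 = t := by omega
        rwa [this]
    rw [hsplit, Finset.filter_union, Finset.card_union_of_disjoint hdisj, ih, himg,
      Finset.card_image_of_injective _ (fun x y h => by omega)]
    ring

variable {r : ℕ}

lemma lineIdx_lt (hmod : r % 3 = 2) {j : ℕ} (hj : j < 2 * r) : lineIdx r j < 10 := by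
  unfold lineIdx
  split <;> omega

/-- The relation defining our graph. -/
def Rel (r : ℕ) (a : ZMod 6) (j : Fin (2 * r)) : Prop := a ∈ lines (lineIdx r j.val)

instance : ∀ a (j : Fin (2*r)), Decidable (Rel r a j) := fun a j =>
  inferInstanceAs (Decidable (a ∈ _))

lemma count_main (hr : 5 ≤ r) (hmod : r % 3 = 2) (a : ZMod 6) :
    ((Finset.range (2*r)).filter (fun j => a ∈ lines (lineIdx r j))).card = r := by
  set k := r / 3 with hk
  have h2r : 2 * r = 6 * k + 4 := by omega
  have hsplit : Finset.range (2*r)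
      = Finset.range (6*k) ∪ (Finset.range 4).image (fun t => 6*k + t) := by
    ext j
    simp only [Finset.mem_union, Finset.mem_range, Finset.mem_image]
    constructor
    · intro hj
      by_cases h : j < 6*k
      · exact Or.inl h
      · exact Or.inr ⟨j - 6*k, by omega, by omega⟩
    · rintro (h | ⟨t, ht, rfl⟩) <;> omega
  have hdisj : Disjoint
      ((Finset.range (6*k)).filter (fun j => a ∈ lines (lineIdx r j)))
      (((Finset.range 4).image (fun t => 6*k + t)).filter (fun j => a ∈ lines (lineIdx r j))) := by
    rw [Finset.disjoint_left]
    intro x hx hx'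
    simp only [Finset.mem_filter, Finset.mem_range, Finset.mem_image] at hx hx'
    omega
  have h1 : ((Finset.range (6*k)).filter (fun j => a ∈ lines (lineIdx r j))).card = 3 * k := by
    have he : (Finset.range (6*k)).filter (fun j => a ∈ lines (lineIdx r j))
        = (Finset.range (6*k)).filter
            (fun j => j % 6 ∈ (Finset.range 6).filter (fun c => a ∈ lines c)) := by
      apply Finset.filter_congr
      intro j hj
      simp only [Finset.mem_range] at hj
      have hidx : lineIdx r j = j % 6 := by unfold lineIdx; simp [hj]; omega
      simp only [hidx, Finset.mem_filter, Finset.mem_range]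
      constructor
      · intro h; exact ⟨Nat.mod_lt _ (by norm_num), h⟩
      · rintro ⟨-, h⟩; exact h
    rw [he, count_mul]
    have : (Finset.range 6).filter
        (fun c => c ∈ (Finset.range 6).filter (fun c => a ∈ lines c))
        = (Finset.range 6).filter (fun c => a ∈ lines c) := by
      ext c
      simp only [Finset.mem_filter, Finset.mem_range]
      tauto
    rw [this, lines_count1 a]
    ring
  have h2 : (((Finset.range 4).image (fun t => 6*k + t)).filter
      (fun j => a ∈ lines (lineIdx r j))).card = 2 := by
    have himg : ((Finset.range 4).image (fun t => 6*k + t)).filter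
          (fun j => a ∈ lines (lineIdx r j))
        = ((Finset.range 4).filter (fun t => a ∈ lines (6 + t))).image (fun t => 6*k + t) := by
      ext j
      simp only [Finset.mem_filter, Finset.mem_image, Finset.mem_range]
      constructor
      · rintro ⟨⟨t, ht, rfl⟩, hj⟩
        refine ⟨t, ⟨ht, ?_⟩, rfl⟩
        have hidx : lineIdx r (6*k + t) = 6 + t := by
          unfold lineIdx; rw [if_neg (by omega)]; omega
        rwa [hidx] at hj
      · rintro ⟨t, ⟨ht, hts⟩, rfl⟩
        refine ⟨⟨t, ht, rfl⟩, ?_⟩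
        have hidx : lineIdx r (6*k + t) = 6 + t := by
          unfold lineIdx; rw [if_neg (by omega)]; omega
        rwa [hidx]
    rw [himg, Finset.card_image_of_injective _ (fun x y h => by omega), lines_count2 a]
  rw [hsplit, Finset.filter_union, Finset.card_union_of_disjoint hdisj, h1, h2]
  omega

lemma adj_iff (a : ZMod 6) (j : Fin (2*r)) :
    (bipGraph (Rel r)).Adj (Sum.inl a) (Sum.inr j) ↔ Rel r a j := Iff.rfl

lemma adj_iff' (a : ZMod 6) (j : Fin (2*r)) :
    (bipGraph (Rel r)).Adj (Sum.inr j) (Sum.inl a) ↔ Rel r a j := Iff.rfl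

/-- Parity of walks in a bipartite graph. -/
lemma walk_parity {A B : Type*} {R : A → B → Prop} {x y : A ⊕ B}
    (w : (bipGraph R).Walk x y) : Even w.length ↔ (x.isLeft = y.isLeft) := by
  induction w with
  | nil => simp
  | @cons u v z h p ih =>
    have hflip : u.isLeft = !v.isLeft := by
      rcases u with a | b <;> rcases v with a' | b' <;> simp_all [bipGraph]
    simp only [SimpleGraph.Walk.length_cons, Nat.even_add_one, ih, hflip]
    cases v.isLeft <;> cases z.isLeft <;> simp

end stmt17

open stmt17 in
/-- For every integer `r ≥ 5` with `r ≡ 2 (mod 3)`, there exists a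
bipartite biregular graph with `6` vertices of degree `r`, `2r` vertices of degree `3`,
and diameter `3`; its order `2r+6` attains the Moore bound `M(r,3;3)`. -/
theorem stmt_17 (r : ℕ) (hr : 5 ≤ r) (hmod : r % 3 = 2) :
    ∃ R : ZMod 6 → Fin (2 * r) → Prop,
      (∀ j : ZMod 6, ((bipGraph R).neighborSet (Sum.inl j)).ncard = r) ∧
      (∀ i : Fin (2 * r), ((bipGraph R).neighborSet (Sum.inr i)).ncard = 3) ∧
      (bipGraph R).diam = 3 ∧
      Fintype.card (ZMod 6 ⊕ Fin (2 * r)) =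
        ((1 + 3 * (r - 1)) / (r / Nat.gcd r 3)) * (r / Nat.gcd r 3 + 3 / Nat.gcd r 3) := by
  have h2r : 10 ≤ 2 * r := by omega
  refine ⟨Rel r, ?_, ?_, ?_, ?_⟩
  · -- left degrees
    intro a
    have hset : (bipGraph (Rel r)).neighborSet (Sum.inl a)
        = Sum.inr '' {j : Fin (2*r) | Rel r a j} := by
      ext x
      rcases x with a' | j <;>
        simp [SimpleGraph.neighborSet, bipGraph, Set.mem_setOf_eq]
    rw [hset, Set.ncard_image_of_injective _ Sum.inr_injective]
    rw [Set.ncard_eq_toFinset_card', Set.toFinset_setOf]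
    have hb : (Finset.univ.filter (fun j : Fin (2*r) => stmt17.Rel r a j)).card
        = ((Finset.range (2*r)).filter (fun j => a ∈ stmt17.lines (stmt17.lineIdx r j))).card := by
      refine Finset.card_nbij (fun j => (j : ℕ)) ?_ ?_ ?_
      · intro j hj
        simp only [Finset.mem_coe, Finset.mem_filter, Finset.mem_univ, true_and] at hj
        simp only [Finset.mem_coe, Finset.mem_filter, Finset.mem_range]
        exact ⟨j.isLt, hj⟩
      · exact fun x _ y _ h => Fin.val_injective h
      · intro n hn
        simp only [Finset.coe_filter, Finset.mem_range, Set.mem_setOf_eq] at hn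
        refine ⟨⟨n, hn.1⟩, ?_, rfl⟩
        simp only [Finset.coe_filter, Finset.mem_univ, true_and, Set.mem_setOf_eq]
        exact hn.2
    rw [hb, count_main hr hmod a]
  · -- right degrees
    intro j
    have hset : (bipGraph (Rel r)).neighborSet (Sum.inr j)
        = Sum.inl '' {a : ZMod 6 | Rel r a j} := by
      ext x
      rcases x with a' | j' <;>
        simp [SimpleGraph.neighborSet, bipGraph, Set.mem_setOf_eq]
    rw [hset, Set.ncard_image_of_injective _ Sum.inl_injective]
    rw [Set.ncard_eq_toFinset_card', Set.toFinset_setOf]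
    have hlt : lineIdx r j.val < 10 := lineIdx_lt hmod j.isLt
    have : Finset.univ.filter (fun a : ZMod 6 => Rel r a j) = lines (lineIdx r j.val) := by
      ext a; simp [stmt17.Rel]; exact Finset.mem_filter.trans (and_iff_right (Finset.mem_univ a))
    rw [this]
    exact lines_card ⟨lineIdx r j.val, hlt⟩
  · -- diameter
    set G := bipGraph (Rel r) with hG
    -- distance bounds via explicit walks
    have hll : ∀ a a' : ZMod 6, ∃ w : G.Walk (Sum.inl a) (Sum.inl a'), w.length = 2 := by
      intro a a'
      obtain ⟨c, hc1, hc2⟩ := lines_cover a a'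
      have hcval : (c : ℕ) < 2 * r := by omega
      set j : Fin (2*r) := ⟨c, hcval⟩ with hj
      have hidx : lineIdx r j.val = c.val := by
        have hjv : (j : ℕ) = c.val := rfl
        have hc6 : (c : ℕ) < 6 := c.isLt
        unfold lineIdx
        rw [hjv, if_pos (by omega), Nat.mod_eq_of_lt hc6]
      have h1 : G.Adj (Sum.inl a) (Sum.inr j) := by
        show stmt17.Rel r a j
        unfold stmt17.Rel; rw [hidx]; exact hc1
      have h2 : G.Adj (Sum.inr j) (Sum.inl a') := by
        show stmt17.Rel r a' j
        unfold stmt17.Rel; rw [hidx]; exact hc2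
      exact ⟨SimpleGraph.Walk.cons h1 (SimpleGraph.Walk.cons h2 SimpleGraph.Walk.nil), rfl⟩
    have hrr : ∀ j j' : Fin (2*r), ∃ w : G.Walk (Sum.inr j) (Sum.inr j'), w.length = 2 := by
      intro j j'
      obtain ⟨a, ha1, ha2⟩ := lines_inter ⟨lineIdx r j.val, lineIdx_lt hmod j.isLt⟩
        ⟨lineIdx r j'.val, lineIdx_lt hmod j'.isLt⟩
      have h1 : G.Adj (Sum.inr j) (Sum.inl a) := ha1
      have h2 : G.Adj (Sum.inl a) (Sum.inr j') := ha2
      exact ⟨SimpleGraph.Walk.cons h1 (SimpleGraph.Walk.cons h2 SimpleGraph.Walk.nil), rfl⟩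
    have hlr : ∀ (a : ZMod 6) (j : Fin (2*r)),
        ∃ w : G.Walk (Sum.inl a) (Sum.inr j), w.length = 3 := by
      intro a j
      obtain ⟨a', ha', -⟩ := lines_inter ⟨lineIdx r j.val, lineIdx_lt hmod j.isLt⟩
        ⟨lineIdx r j.val, lineIdx_lt hmod j.isLt⟩
      obtain ⟨w, hw⟩ := hll a a'
      have h3 : G.Adj (Sum.inl a') (Sum.inr j) := ha'
      exact ⟨w.concat h3, by simp [hw]⟩
    have hedist : ∀ u v : ZMod 6 ⊕ Fin (2*r), G.edist u v ≤ 3 := by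
      intro u v
      rcases u with a | j <;> rcases v with a' | j'
      · obtain ⟨w, hw⟩ := hll a a'
        calc G.edist _ _ ≤ w.length := SimpleGraph.Walk.edist_le w
        _ ≤ 3 := by rw [hw]; norm_num
      · obtain ⟨w, hw⟩ := hlr a j'
        calc G.edist _ _ ≤ w.length := SimpleGraph.Walk.edist_le w
        _ ≤ 3 := by rw [hw]; norm_num
      · obtain ⟨w, hw⟩ := hlr a' j
        rw [SimpleGraph.edist_comm]
        calc G.edist _ _ ≤ w.length := SimpleGraph.Walk.edist_le w
        _ ≤ 3 := by rw [hw]; norm_num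
      · obtain ⟨w, hw⟩ := hrr j j'
        calc G.edist _ _ ≤ w.length := SimpleGraph.Walk.edist_le w
        _ ≤ 3 := by rw [hw]; norm_num
    have hediam : G.ediam ≤ 3 := SimpleGraph.ediam_le_of_edist_le hedist
    have hediam_ne_top : G.ediam ≠ ⊤ := fun h => by simp [h] at hediam
    -- the pair at distance exactly 3
    set j0 : Fin (2*r) := ⟨0, by omega⟩ with hj0
    have hnadj : ¬ G.Adj (Sum.inl (2 : ZMod 6)) (Sum.inr j0) := by
      show ¬ stmt17.Rel r (2 : ZMod 6) j0
      unfold stmt17.Rel lineIdx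
      have : (j0 : ℕ) = 0 := rfl
      rw [this]
      have h6 : 0 < 6 * (r / 3) := by omega
      simp only [h6, if_pos]
      exact two_notin_lines0
    have hdist3 : G.dist (Sum.inl (2 : ZMod 6)) (Sum.inr j0) = 3 := by
      have hreach : G.Reachable (Sum.inl (2 : ZMod 6)) (Sum.inr j0) := by
        obtain ⟨w, -⟩ := hlr (2 : ZMod 6) j0
        exact ⟨w⟩
      obtain ⟨w, hw⟩ := hreach.exists_walk_length_eq_dist
      have hodd : ¬ Even (G.dist (Sum.inl (2 : ZMod 6)) (Sum.inr j0)) := by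
        rw [← hw]
        rw [walk_parity w]
        simp
      have hle : G.dist (Sum.inl (2 : ZMod 6)) (Sum.inr j0) ≤ 3 := by
        obtain ⟨w', hw'⟩ := hlr (2 : ZMod 6) j0
        calc G.dist _ _ ≤ w'.length := SimpleGraph.dist_le w'
        _ = 3 := hw'
      have hne1 : G.dist (Sum.inl (2 : ZMod 6)) (Sum.inr j0) ≠ 1 := by
        intro h
        exact hnadj (SimpleGraph.dist_eq_one_iff_adj.mp h)
      interval_cases h : G.dist (Sum.inl (2 : ZMod 6)) (Sum.inr j0) <;> simp_all
    have hge : 3 ≤ G.diam := hdist3 ▸ SimpleGraph.dist_le_diam hediam_ne_top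
    have hle : G.diam ≤ 3 := by
      have : G.ediam.toNat ≤ (3 : ℕ∞).toNat :=
        ENat.toNat_le_toNat hediam (by norm_num)
      simpa [SimpleGraph.diam] using this
    omega
  · -- Moore bound arithmetic
    have hgcd : Nat.gcd r 3 = 1 := by
      rw [Nat.gcd_comm, Nat.gcd_rec, hmod]; rfl
    rw [hgcd]
    simp only [Nat.div_one]
    have h1 : 1 + 3 * (r - 1) = r * 2 + (r - 2) := by omega
    rw [h1, Nat.mul_add_div (by omega), Nat.div_eq_of_lt (by omega)]
    simp only [Fintype.card_sum, Fintype.card_fin, ZMod.card]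
    omega
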